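/- Let A : ℂ[F] → ℂ[F] be the linear map with A λ_w = |w| λ_w (the generator of the word-length semigroup). Then for all x ∈ ℂ[F]: A(x*)·x + x*·A(x) − A(x*·x) = 2 · Σ_{h ∈ F∖{e}} (L_h x)*·(L_h x), where the sum on the right has only finitely many nonzero terms (only h that are prefixes of words in the support of x contribute). -/

import Mathlib

open scoped Classical

noncomputable section

abbrev F := FreeGroup ℕ
abbrev A := MonoidAlgebra ℂ F

def lam (w : F) : A := MonoidAlgebra.single w 1

def tau (x : A) : ℂ := x.coeff 1

def len (w : F) : ℕ := w.toWord.length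

abbrev Letter := ℕ × Bool

def firstL (w : F) : Option Letter := w.toWord.head?
def lastL (w : F) : Option Letter := w.toWord.getLast?

def invLetter (s : Letter) : Letter := (s.1, !s.2)

/-- `g` is a prefix of `w` : `|g⁻¹w| = |w| - |g|`. -/
def isPrefix (g w : F) : Prop := len g + len (g⁻¹ * w) = len w

/-- the involution `x* (w) = conj (x (w⁻¹))`. -/
def starA (x : A) : A :=
  MonoidAlgebra.ofCoeff (Finsupp.mapDomain (fun w : F => w⁻¹)
    (Finsupp.mapRange (fun c => (starRingEnd ℂ) c) (by simp) x.coeff))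

def Ls (s : Letter) (x : A) : A := MonoidAlgebra.ofCoeff (Finsupp.filter (fun w => firstL w = some s) x.coeff)
def Rs (s : Letter) (x : A) : A := MonoidAlgebra.ofCoeff (Finsupp.filter (fun w => lastL w = some s) x.coeff)

def Lk (k : ℕ) (x : A) : A := Ls (k, true) x + Ls (k, false) x
def Rk (k : ℕ) (x : A) : A := Rs (k, true) x + Rs (k, false) x

def Lh (h : F) (x : A) : A := MonoidAlgebra.ofCoeff (Finsupp.filter (fun w => isPrefix h w) x.coeff)

def Heps (εe : ℂ) (ε : ℕ → ℂ) (x : A) : A :=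
  (εe * tau x) • lam 1 + ∑ᶠ k : ℕ, ε k • Lk k x

def HepsOp (εe : ℂ) (ε : ℕ → ℂ) (x : A) : A :=
  ((starRingEnd ℂ) εe * tau x) • lam 1 + ∑ᶠ k : ℕ, ((starRingEnd ℂ) (ε k)) • Rk k x

/-- noncommutative `L^{2^m}` norm. -/
def Lnorm (m : ℕ) (x : A) : ℝ :=
  (tau ((starA x * x) ^ (2 ^ (m - 1)))).re ^ ((1 : ℝ) / (2 ^ m : ℝ))

/-- `(τ(y^{2^{m-1}}))^{1/2^m}` for positive `y`. -/
def Qnorm (m : ℕ) (y : A) : ℝ :=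
  (tau (y ^ (2 ^ (m - 1)))).re ^ ((1 : ℝ) / (2 ^ m : ℝ))

def ddag (x y : A) : A :=
  Finsupp.sum x.coeff fun g cg => Finsupp.sum y.coeff fun h ch =>
    if ¬ isPrefix g⁻¹ h then (cg * ch) • lam (g * h) else 0

def dag (x y : A) : A :=
  Finsupp.sum x.coeff fun g cg => Finsupp.sum y.coeff fun h ch =>
    if isPrefix g⁻¹ h ∧ g⁻¹ ≠ h then (cg * ch) • lam (g * h) else 0


/-- the generator of the word-length semigroup, `A λ_w = |w| λ_w`. -/
def Agen (x : A) : A := Finsupp.sum x.coeff fun w c => ((len w : ℂ) * c) • lam w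

namespace CdC

open List FreeGroup

/-- no-cancellation relation on adjacent letters -/
def NC (a b : Letter) : Prop := ¬(a.1 = b.1 ∧ a.2 = !b.2)

lemma chain'_reduce (L : List Letter) : IsChain NC (reduce L) := by
  induction L with
  | nil => simp
  | cons x L ih =>
    rw [FreeGroup.reduce.cons]
    rcases h : reduce L with _ | ⟨hd, tl⟩
    · simp
    · rw [h] at ih
      by_cases hc : x.1 = hd.1 ∧ x.2 = !hd.2
      · simp only [if_pos hc]; exact ih.tail
      · simp only [if_neg hc]
        exact List.isChain_cons_cons.2 ⟨hc, ih⟩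

lemma reduce_eq_self {L : List Letter} (h : IsChain NC L) : reduce L = L := by
  induction L with
  | nil => rfl
  | cons x L ih =>
    rw [FreeGroup.reduce.cons, ih h.tail]
    rcases L with _ | ⟨hd, tl⟩
    · rfl
    · have : NC x hd := (List.isChain_cons_cons.1 h).1
      simp only [if_neg this]

lemma chain'_toWord (g : F) : IsChain NC g.toWord := by
  rw [← reduce_toWord]; exact chain'_reduce _

lemma chain'_invRev {L : List Letter} (h : IsChain NC L) : IsChain NC (invRev L) := by
  unfold invRev
  rw [List.isChain_reverse, List.isChain_map]
  refine h.imp ?_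
  rintro ⟨a1, a2⟩ ⟨b1, b2⟩ hab ⟨h1, h2⟩
  exact hab ⟨h1.symm, by revert h2; cases a2 <;> cases b2 <;> simp⟩

lemma invRev_cons (a : Letter) (L : List Letter) :
    invRev (a :: L) = invRev L ++ [(a.1, !a.2)] := by
  simp [invRev]

/-- common prefix length -/
def cp : List Letter → List Letter → ℕ
  | [], _ => 0
  | _, [] => 0
  | a :: L, b :: M => if a = b then cp L M + 1 else 0

@[simp] lemma cp_nil_left (M : List Letter) : cp [] M = 0 := by cases M <;> rfl
@[simp] lemma cp_nil_right (L : List Letter) : cp L [] = 0 := by cases L <;> rfl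
lemma cp_cons (a b : Letter) (L M : List Letter) :
    cp (a :: L) (b :: M) = if a = b then cp L M + 1 else 0 := rfl

lemma cp_le_left : ∀ (L M : List Letter), cp L M ≤ L.length
  | [], _ => by simp
  | _ :: _, [] => by simp
  | a :: L, b :: M => by
    rw [cp_cons]; split
    · simpa using cp_le_left L M
    · simp

lemma take_cp_eq : ∀ (L M : List Letter), L.take (cp L M) = M.take (cp L M)
  | [], _ => by simp
  | _ :: _, [] => by simp
  | a :: L, b :: M => by
    rw [cp_cons]; split
    · next h => simp [h, take_cp_eq L M]
    · simp

lemma length_le_cp : ∀ {K L M : List Letter}, K <+: L → K <+: M → K.length ≤ cp L M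
  | [], _, _, _, _ => by simp
  | k :: K, L, M, hL, hM => by
    rcases L with _ | ⟨a, L⟩; · exact absurd hL.length_le (by simp)
    rcases M with _ | ⟨b, M⟩; · exact absurd hM.length_le (by simp)
    obtain ⟨rfl, hL'⟩ : k = a ∧ K <+: L := by
      obtain ⟨t, ht⟩ := hL; injection ht with h1 h2; exact ⟨h1, ⟨t, h2⟩⟩
    obtain ⟨rfl, hM'⟩ : k = b ∧ K <+: M := by
      obtain ⟨t, ht⟩ := hM; injection ht with h1 h2; exact ⟨h1, ⟨t, h2⟩⟩
    rw [cp_cons, if_pos rfl]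
    rw [List.length_cons]; exact Nat.succ_le_succ (length_le_cp hL' hM')

/-- main cancellation lemma -/
lemma reduce_invRev_append : ∀ (L M : List Letter), IsChain NC L → IsChain NC M →
    (reduce (invRev L ++ M)).length + 2 * cp L M = L.length + M.length
  | [], M, _, hM => by simp [invRev, reduce_eq_self hM]
  | a :: L, [], hL, _ => by
    rw [List.append_nil, reduce_eq_self (chain'_invRev hL), cp_nil_right]
    simp [invRev_length]
  | a :: L, b :: M, hL, hM => by
    by_cases hab : a = b
    · subst hab
      have hstep : reduce (invRev (a :: L) ++ a :: M) = reduce (invRev L ++ M) := by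
        have : invRev (a :: L) ++ a :: M
            = invRev L ++ (a.1, !a.2) :: (a.1, !(!a.2)) :: M := by
          rw [invRev_cons]; simp
        rw [this]
        exact FreeGroup.reduce.Step.eq FreeGroup.Red.Step.not
      rw [hstep, cp_cons, if_pos rfl]
      have := reduce_invRev_append L M hL.tail hM.tail
      simp only [List.length_cons]
      omega
    · have hred : reduce (invRev (a :: L) ++ b :: M) = invRev (a :: L) ++ b :: M := by
        apply reduce_eq_self
        rw [List.isChain_append]
        refine ⟨chain'_invRev hL, hM, ?_⟩
        intro p hp q hq
        rw [invRev_cons, List.getLast?_concat] at hp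
        simp only [List.head?_cons, Option.mem_def, Option.some.injEq] at hp hq
        subst hp; subst hq
        rintro ⟨h1, h2⟩
        exact hab (Prod.ext h1 (by revert h2; cases a.2 <;> cases b.2 <;> simp))
      rw [hred, cp_cons, if_neg hab]
      simp [invRev_length]

/-- group-level cancellation -/
lemma len_key (g w : F) :
    len g + len w = len (g⁻¹ * w) + 2 * cp g.toWord w.toWord := by
  have h1 : g⁻¹ * w = FreeGroup.mk (invRev g.toWord ++ w.toWord) := by
    conv_lhs => rw [← FreeGroup.mk_toWord (x := g), ← FreeGroup.mk_toWord (x := w)]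
    rw [FreeGroup.inv_mk, FreeGroup.mul_mk]
  have h2 : len (g⁻¹ * w) = (reduce (invRev g.toWord ++ w.toWord)).length := by
    rw [h1]; rfl
  rw [h2]
  have hg : len g = (FreeGroup.toWord g).length := rfl
  have hw : len w = (FreeGroup.toWord w).length := rfl
  rw [hg, hw]
  have := reduce_invRev_append g.toWord w.toWord (chain'_toWord g) (chain'_toWord w)
  omega

lemma isPrefix_iff {h w : F} : isPrefix h w ↔ h.toWord <+: w.toWord := by
  constructor
  · intro hp
    unfold isPrefix at hp
    set u := h⁻¹ * w with hu
    have hw : w = h * u := by rw [hu]; group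
    have hsub : (h * u).toWord <+ h.toWord ++ u.toWord := toWord_mul_sublist h u
    have hlen : (h * u).toWord.length = (h.toWord ++ u.toWord).length := by
      rw [← hw, List.length_append]
      exact (hp.symm : (len w : ℕ) = _)
    have := hsub.eq_of_length hlen
    rw [← hw] at this
    rw [this]
    exact List.prefix_append _ _
  · rintro ⟨t, ht⟩
    have hchain : IsChain NC t := (chain'_toWord w).suffix ⟨h.toWord, ht⟩
    have hwt : w = h * FreeGroup.mk t := by
      conv_lhs => rw [← FreeGroup.mk_toWord (x := w)]
      conv_rhs => rw [← FreeGroup.mk_toWord (x := h)]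
      rw [FreeGroup.mul_mk, ht]
    have h2 : h⁻¹ * w = FreeGroup.mk t := by rw [hwt]; group
    unfold isPrefix
    rw [h2]
    have : len (FreeGroup.mk t) = t.length := by
      show (FreeGroup.toWord _).length = _
      rw [FreeGroup.toWord_mk, reduce_eq_self hchain]
    rw [this]
    show (FreeGroup.toWord h).length + t.length = (FreeGroup.toWord w).length
    rw [← ht]
    exact (List.length_append).symm

end CdC

namespace CdC
open List FreeGroup

lemma toWord_mk_take (g : F) (k : ℕ) :
    (FreeGroup.mk (g.toWord.take k)).toWord = g.toWord.take k := by
  rw [FreeGroup.toWord_mk]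
  exact reduce_eq_self ((chain'_toWord g).prefix (List.take_prefix _ _))

lemma len_mk_take (g : F) (k : ℕ) :
    len (FreeGroup.mk (g.toWord.take k)) = min k (len g) := by
  show (FreeGroup.toWord _).length = _
  rw [toWord_mk_take, List.length_take]
  rfl

lemma exists_take {h w : F} (hp : isPrefix h w) :
    len h ≤ len w ∧ h = FreeGroup.mk (w.toWord.take (len h)) := by
  have hpre := isPrefix_iff.1 hp
  constructor
  · have := hpre.length_le; exact this
  · have := List.prefix_iff_eq_take.1 hpre
    show h = FreeGroup.mk ((FreeGroup.toWord w).take (FreeGroup.toWord h).length)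
    conv_lhs => rw [← FreeGroup.mk_toWord (x := h)]
    rw [← this]

def Nfin (g w : F) : Finset F :=
  (Finset.Icc 1 (cp g.toWord w.toWord)).image fun k => FreeGroup.mk (g.toWord.take k)

lemma mem_Nfin {h g w : F} :
    h ∈ Nfin g w ↔ h ≠ 1 ∧ isPrefix h g ∧ isPrefix h w := by
  have hcle : cp g.toWord w.toWord ≤ len g := cp_le_left _ _
  constructor
  · intro hm
    obtain ⟨k, hk, rfl⟩ := Finset.mem_image.1 hm
    rw [Finset.mem_Icc] at hk
    have hlen : len (FreeGroup.mk (g.toWord.take k)) = k := by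
      rw [len_mk_take]; omega
    refine ⟨?_, ?_, ?_⟩
    · intro h1
      rw [h1] at hlen
      simp [len] at hlen
      omega
    · rw [isPrefix_iff, toWord_mk_take]
      exact List.take_prefix _ _
    · rw [isPrefix_iff, toWord_mk_take]
      have h1 : g.toWord.take k = (g.toWord.take (cp g.toWord w.toWord)).take k := by
        rw [List.take_take, min_eq_left hk.2]
      rw [h1, take_cp_eq, List.take_take, min_eq_left hk.2]
      exact List.take_prefix _ _
  · rintro ⟨h1, hg, hw⟩
    obtain ⟨hkg, hhg⟩ := exists_take hg
    apply Finset.mem_image.2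
    refine ⟨len h, Finset.mem_Icc.2 ⟨?_, ?_⟩, hhg.symm⟩
    · have : h.toWord ≠ [] := fun hn => h1 (FreeGroup.toWord_eq_nil_iff.1 hn)
      have : h.toWord.length ≠ 0 := fun hn => this (List.length_eq_zero_iff.1 hn)
      show 1 ≤ h.toWord.length
      omega
    · exact length_le_cp (isPrefix_iff.1 hg) (isPrefix_iff.1 hw)

lemma card_Nfin (g w : F) : (Nfin g w).card = cp g.toWord w.toWord := by
  have hcle : cp g.toWord w.toWord ≤ len g := cp_le_left _ _
  rw [Nfin, Finset.card_image_of_injOn, Nat.card_Icc]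
  · omega
  · intro k1 hk1 k2 hk2 he
    rw [Finset.coe_Icc, Set.mem_Icc] at hk1 hk2
    have e1 := len_mk_take g k1
    have e2 := len_mk_take g k2
    change FreeGroup.mk _ = FreeGroup.mk _ at he
    rw [he] at e1
    rw [e1] at e2
    omega

end CdC


namespace CdC

lemma msingle_eq (w : F) (c : ℂ) :
    MonoidAlgebra.single w c = MonoidAlgebra.ofCoeff (Finsupp.single w c) := rfl

lemma singleMulSingle (a c : F) (b d : ℂ) :
    (MonoidAlgebra.single a b : A) * MonoidAlgebra.single c d
      = MonoidAlgebra.single (a * c) (b * d) :=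
  MonoidAlgebra.single_mul_single a c b d

lemma starA_single (w : F) (c : ℂ) :
    starA (MonoidAlgebra.single w c) = MonoidAlgebra.single w⁻¹ ((starRingEnd ℂ) c) := by
  rw [msingle_eq, msingle_eq, starA, MonoidAlgebra.coeff_ofCoeff, Finsupp.mapRange_single,
    Finsupp.mapDomain_single]

lemma starA_add (a b : A) : starA (a + b) = starA a + starA b := by
  rw [starA, starA, starA, MonoidAlgebra.coeff_add, Finsupp.mapRange_add (by intros; apply map_add),
    Finsupp.mapDomain_add, MonoidAlgebra.ofCoeff_add]

lemma starA_zero : starA 0 = 0 := by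
  rw [starA]
  simp

lemma Agen_add (a b : A) : Agen (a + b) = Agen a + Agen b := by
  rw [Agen, Agen, Agen, MonoidAlgebra.coeff_add]
  apply Finsupp.sum_add_index
  · intros; simp
  · intro w _ c1 c2; rw [mul_add, add_smul]

lemma Agen_single (w : F) (c : ℂ) :
    Agen (MonoidAlgebra.single w c) = MonoidAlgebra.single w ((len w : ℂ) * c) := by
  rw [msingle_eq, Agen, MonoidAlgebra.coeff_ofCoeff, Finsupp.sum_single_index (by simp)]
  rw [lam, MonoidAlgebra.smul_single', mul_one]

lemma Lh_add (h : F) (a b : A) : Lh h (a + b) = Lh h a + Lh h b := by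
  rw [Lh, Lh, Lh, MonoidAlgebra.coeff_add, Finsupp.filter_add, MonoidAlgebra.ofCoeff_add]

lemma Lh_single (h w : F) (c : ℂ) :
    Lh h (MonoidAlgebra.single w c)
      = if isPrefix h w then MonoidAlgebra.single w c else 0 := by
  rw [msingle_eq, Lh, MonoidAlgebra.coeff_ofCoeff]
  split
  · exact congrArg MonoidAlgebra.ofCoeff (Finsupp.filter_single_of_pos _ (by assumption))
  · exact congrArg MonoidAlgebra.ofCoeff (Finsupp.filter_single_of_neg _ (by assumption))

lemma starA_sum {i : Type} (t : Finset i) (f : i → A) :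
    starA (∑ j ∈ t, f j) = ∑ j ∈ t, starA (f j) :=
  map_sum (AddMonoidHom.mk' starA starA_add) f t

lemma Agen_sum {i : Type} (t : Finset i) (f : i → A) :
    Agen (∑ j ∈ t, f j) = ∑ j ∈ t, Agen (f j) :=
  map_sum (AddMonoidHom.mk' Agen Agen_add) f t

lemma Lh_sum (h : F) {i : Type} (t : Finset i) (f : i → A) :
    Lh h (∑ j ∈ t, f j) = ∑ j ∈ t, Lh h (f j) :=
  map_sum (AddMonoidHom.mk' (Lh h) (Lh_add h)) f t

lemma len_inv (g : F) : len g⁻¹ = len g := by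
  show (FreeGroup.toWord _).length = _
  rw [FreeGroup.toWord_inv, FreeGroup.invRev_length]
  rfl

lemma smul_msingle (c : ℂ) (a : F) (b : ℂ) :
    c • (MonoidAlgebra.single a b : A) = MonoidAlgebra.single a (c * b) :=
  MonoidAlgebra.smul_single' c a b

lemma nsmul_msingle (n : ℕ) (a : F) (b : ℂ) :
    n • (MonoidAlgebra.single a b : A) = MonoidAlgebra.single a ((n : ℂ) * b) := by
  rw [← smul_msingle]
  exact (Nat.cast_smul_eq_nsmul ℂ n _).symm

lemma msingle_add (a : F) (b c : ℂ) :
    (MonoidAlgebra.single a b : A) + MonoidAlgebra.single a c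
      = MonoidAlgebra.single a (b + c) := by
  exact (MonoidAlgebra.single_add a b c).symm

lemma msingle_sub (a : F) (b c : ℂ) :
    (MonoidAlgebra.single a b : A) - MonoidAlgebra.single a c
      = MonoidAlgebra.single a (b - c) := by
  rw [sub_eq_iff_eq_add, ← MonoidAlgebra.single_add, sub_add_cancel]

end CdC

/-- the carré du champ of the word-length generator is twice the sum of the
squares of the prefix projections. -/
theorem carre_du_champ (x : A) :
    Agen (starA x) * x + starA x * Agen x - Agen (starA x * x)
      = (2 : ℂ) • ∑ᶠ (h : F) (_ : h ≠ (1 : F)), starA (Lh h x) * Lh h x := by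
  classical
  open CdC in
  set s := x.coeff.support with hs
  have hxs : x = ∑ w ∈ s, MonoidAlgebra.single w (x.coeff w) := by
    conv_lhs => rw [← MonoidAlgebra.sum_coeff_single x]
    rfl
  have hstar : starA x = ∑ g ∈ s, MonoidAlgebra.single g⁻¹ ((starRingEnd ℂ) (x.coeff g)) := by
    conv_lhs => rw [hxs]
    rw [starA_sum]
    exact Finset.sum_congr rfl fun g _ => starA_single g (x.coeff g)
  have hAstar : Agen (starA x)
      = ∑ g ∈ s, MonoidAlgebra.single g⁻¹ ((len g : ℂ) * (starRingEnd ℂ) (x.coeff g)) := by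
    rw [hstar, Agen_sum]
    refine Finset.sum_congr rfl fun g _ => ?_
    rw [Agen_single, len_inv]
  have hAx : Agen x = ∑ w ∈ s, MonoidAlgebra.single w ((len w : ℂ) * x.coeff w) := by
    conv_lhs => rw [hxs]
    rw [Agen_sum]
    exact Finset.sum_congr rfl fun w _ => Agen_single w (x.coeff w)
  have hmul2 : ∀ c d : F → ℂ,
      (∑ g ∈ s, (MonoidAlgebra.single g⁻¹ (c g) : A)) * (∑ w ∈ s, MonoidAlgebra.single w (d w))
        = ∑ g ∈ s, ∑ w ∈ s, MonoidAlgebra.single (g⁻¹ * w) (c g * d w) := by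
    intro c d
    rw [Finset.sum_mul_sum]
    exact Finset.sum_congr rfl fun g _ => Finset.sum_congr rfl fun w _ =>
      singleMulSingle g⁻¹ w (c g) (d w)
  have P1 : Agen (starA x) * x
      = ∑ g ∈ s, ∑ w ∈ s, MonoidAlgebra.single (g⁻¹ * w)
          (((len g : ℂ) * (starRingEnd ℂ) (x.coeff g)) * x.coeff w) := by
    have h := hmul2 (fun g => (len g : ℂ) * (starRingEnd ℂ) (x.coeff g)) (fun w => x.coeff w)
    beta_reduce at h
    rw [← hAstar, ← hxs] at h
    exact h
  have P2 : starA x * Agen x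
      = ∑ g ∈ s, ∑ w ∈ s, MonoidAlgebra.single (g⁻¹ * w)
          ((starRingEnd ℂ) (x.coeff g) * ((len w : ℂ) * x.coeff w)) := by
    have h := hmul2 (fun g => (starRingEnd ℂ) (x.coeff g)) (fun w => (len w : ℂ) * x.coeff w)
    beta_reduce at h
    rw [← hstar, ← hAx] at h
    exact h
  have P3 : Agen (starA x * x)
      = ∑ g ∈ s, ∑ w ∈ s, MonoidAlgebra.single (g⁻¹ * w)
          ((len (g⁻¹ * w) : ℂ) * ((starRingEnd ℂ) (x.coeff g) * x.coeff w)) := by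
    have h := hmul2 (fun g => (starRingEnd ℂ) (x.coeff g)) (fun w => x.coeff w)
    beta_reduce at h
    rw [← hstar, ← hxs] at h
    rw [h, Agen_sum]
    refine Finset.sum_congr rfl fun g _ => ?_
    rw [Agen_sum]
    exact Finset.sum_congr rfl fun w _ => Agen_single _ _
  have P4 : ∀ h : F, starA (Lh h x) * Lh h x
      = ∑ g ∈ s, ∑ w ∈ s,
          if isPrefix h g ∧ isPrefix h w
          then MonoidAlgebra.single (g⁻¹ * w) ((starRingEnd ℂ) (x.coeff g) * x.coeff w) else 0 := by
    intro h
    have hLh : Lh h x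
        = ∑ w ∈ s, if isPrefix h w then MonoidAlgebra.single w (x.coeff w) else 0 := by
      conv_lhs => rw [hxs]
      rw [Lh_sum]
      exact Finset.sum_congr rfl fun w _ => Lh_single h w (x.coeff w)
    have hLstar : starA (Lh h x)
        = ∑ g ∈ s, if isPrefix h g
            then MonoidAlgebra.single g⁻¹ ((starRingEnd ℂ) (x.coeff g)) else 0 := by
      rw [hLh, starA_sum]
      refine Finset.sum_congr rfl fun g _ => ?_
      by_cases hp : isPrefix h g
      · rw [if_pos hp, if_pos hp]
        exact starA_single g (x.coeff g)
      · rw [if_neg hp, if_neg hp]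
        exact starA_zero
    rw [hLstar, hLh, Finset.sum_mul_sum]
    refine Finset.sum_congr rfl fun g _ => Finset.sum_congr rfl fun w _ => ?_
    by_cases hg : isPrefix h g
    · by_cases hw : isPrefix h w
      · rw [if_pos hg, if_pos hw, if_pos ⟨hg, hw⟩, singleMulSingle]
      · rw [if_pos hg, if_neg hw, mul_zero, if_neg (fun hc => hw hc.2)]
    · rw [if_neg hg, zero_mul, if_neg (fun hc => hg hc.1)]
  set T : Finset F :=
    s.biUnion (fun w => (Finset.range (len w + 1)).image
      fun k => FreeGroup.mk (w.toWord.take k)) with hT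
  have hmemT : ∀ h w : F, w ∈ s → isPrefix h w → h ∈ T := by
    intro h w hws hp
    obtain ⟨hle, heq⟩ := exists_take hp
    refine Finset.mem_biUnion.2 ⟨w, hws, Finset.mem_image.2 ⟨len h, ?_, heq.symm⟩⟩
    rw [Finset.mem_range]
    omega
  have hLh0 : ∀ h : F, h ∉ T → Lh h x = 0 := by
    intro h hh
    rw [Lh, ← MonoidAlgebra.coeff_inj, MonoidAlgebra.coeff_ofCoeff, MonoidAlgebra.coeff_zero,
      Finsupp.filter_eq_zero_iff]
    intro w hpw
    by_contra hxw
    exact hh (hmemT h w (Finsupp.mem_support_iff.2 hxw) hpw)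
  have hfin : (∑ᶠ (h : F) (_ : h ≠ (1 : F)), starA (Lh h x) * Lh h x)
      = ∑ h ∈ T, if h ≠ 1 then starA (Lh h x) * Lh h x else 0 := by
    have h1 : ∀ h : F, (∑ᶠ (_ : h ≠ (1 : F)), starA (Lh h x) * Lh h x)
        = if h ≠ 1 then starA (Lh h x) * Lh h x else 0 := fun h => finsum_eq_if
    rw [finsum_congr h1]
    apply finsum_eq_sum_of_support_subset
    intro h hh
    simp only [Function.mem_support] at hh
    by_contra hhT
    apply hh
    by_cases h1 : h = 1
    · rw [if_neg (not_not_intro h1)]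
    · rw [if_pos h1, hLh0 h hhT, starA_zero, zero_mul]
  have hfilter : ∀ g ∈ s, ∀ w ∈ s,
      (T.filter fun h => h ≠ 1 ∧ isPrefix h g ∧ isPrefix h w) = Nfin g w := by
    intro g hg w hw
    ext h
    rw [Finset.mem_filter, mem_Nfin]
    constructor
    · rintro ⟨-, hq⟩; exact hq
    · rintro ⟨h1, hpg, hpw⟩
      exact ⟨hmemT h g hg hpg, h1, hpg, hpw⟩
  have R1 : (∑ h ∈ T, if h ≠ 1 then starA (Lh h x) * Lh h x else 0)
      = ∑ g ∈ s, ∑ w ∈ s, MonoidAlgebra.single (g⁻¹ * w)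
          (((Nfin g w).card : ℂ) * ((starRingEnd ℂ) (x.coeff g) * x.coeff w)) := by
    have step1 : ∀ h ∈ T, (if h ≠ 1 then starA (Lh h x) * Lh h x else 0)
        = ∑ g ∈ s, ∑ w ∈ s, (if h ≠ 1 ∧ isPrefix h g ∧ isPrefix h w
            then MonoidAlgebra.single (g⁻¹ * w) ((starRingEnd ℂ) (x.coeff g) * x.coeff w) else 0) := by
      intro h _
      by_cases h1 : h ≠ 1
      · rw [if_pos h1, P4 h]
        refine Finset.sum_congr rfl fun g _ => Finset.sum_congr rfl fun w _ => ?_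
        simp [h1]
      · rw [if_neg h1]
        symm
        refine Finset.sum_eq_zero fun g _ => Finset.sum_eq_zero fun w _ => ?_
        simp [h1]
    rw [Finset.sum_congr rfl step1, Finset.sum_comm]
    refine Finset.sum_congr rfl fun g hg => ?_
    rw [Finset.sum_comm]
    refine Finset.sum_congr rfl fun w hw => ?_
    rw [← Finset.sum_filter, hfilter g hg w hw, Finset.sum_const, nsmul_msingle]
  rw [P1, P2, P3, hfin, R1, Finset.smul_sum, ← Finset.sum_add_distrib,
    ← Finset.sum_sub_distrib]
  refine Finset.sum_congr rfl fun g _ => ?_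
  rw [Finset.smul_sum, ← Finset.sum_add_distrib, ← Finset.sum_sub_distrib]
  refine Finset.sum_congr rfl fun w _ => ?_
  rw [smul_msingle, msingle_add, msingle_sub]
  have hn : len g + len w = len (g⁻¹ * w) + 2 * (Nfin g w).card := by
    rw [card_Nfin]
    exact len_key g w
  have hc : ((len g : ℂ)) + (len w : ℂ)
      = (len (g⁻¹ * w) : ℂ) + 2 * ((Nfin g w).card : ℂ) := by
    exact_mod_cast hn
  congr 1
  linear_combination ((starRingEnd ℂ) (x.coeff g) * x.coeff w) * hc
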